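/- Let M ≥ 1, λ_SR > 0, λ_RD > 0, η > 0, Ψ > 0 and γ_th > 0. Let X be the maximum of M i.i.d. exponential(λ_SR) random variables and let Y be exponential(λ_RD), independent of X. Then P( η Ψ X Y / (1 + √(η Y))² < γ_th ) = 1 + Σ_{b=1}^{M} (−1)^b C(M,b) exp(−b λ_SR γ_th/Ψ) · λ_RD ∫₀^∞ exp( −2 b λ_SR γ_th/(Ψ √(η x)) − b λ_SR γ_th/(η Ψ x) − λ_RD x ) dx. -/

import Mathlib

open MeasureTheory ProbabilityTheory Real Finset

lemma expMeasure_singleton {r t : ℝ} : expMeasure r {t} = 0 := by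
  rw [expMeasure, gammaMeasure, withDensity_apply _ (measurableSet_singleton t),
    setLIntegral_measure_zero _ _ (by simp)]

lemma expMeasure_Iio {r t : ℝ} (hr : 0 < r) (ht : 0 ≤ t) :
    expMeasure r (Set.Iio t) = ENNReal.ofReal (1 - Real.exp (-(r * t))) := by
  have hprob := isProbabilityMeasure_expMeasure hr
  have h1 : expMeasure r (Set.Iic t) = ENNReal.ofReal (1 - Real.exp (-(r * t))) := by
    rw [← ofReal_cdf]
    have h2 : cdf (expMeasure r) t = if 0 ≤ t then 1 - Real.exp (-(r * t)) else 0 :=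
      cdf_expMeasure_eq hr t
    rw [h2, if_pos ht]
  rw [← Set.Iio_union_right] at h1
  rw [← h1]
  refine le_antisymm (measure_mono Set.subset_union_left) ?_
  calc expMeasure r (Set.Iio t ∪ {t}) ≤ expMeasure r (Set.Iio t) + expMeasure r {t} :=
        measure_union_le _ _
    _ = expMeasure r (Set.Iio t) := by rw [expMeasure_singleton, add_zero]

lemma fin_ciSup_lt_iff {n : ℕ} [Nonempty (Fin n)] (f : Fin n → ℝ) (a : ℝ) :
    (⨆ i, f i) < a ↔ ∀ i, f i < a := by
  constructor
  · intro h i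
    exact lt_of_le_of_lt (le_ciSup (Set.finite_range f).bddAbove i) h
  · intro h
    have hmem : iSup f ∈ Set.range f :=
      (Set.range_nonempty f).csSup_mem (Set.finite_range f)
    obtain ⟨i, hi⟩ := hmem
    rw [← hi]
    exact h i

/-- Theorem 3 of the paper (exact integral form, Appendix C, eq. (34)): outage probability of
the DPSR scheme, whose end-to-end SNR under the optimal splitting ratio `ρ* = 1/(1+√(ηY))` is
`ηΨXY/(1+√(ηY))²`. `X` is the maximum of `M` i.i.d. exponential(λ_SR) gains and `Y` is the
(independent) exponential(λ_RD) relay-to-destination gain. -/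
theorem statement_10 {Ω : Type*} [MeasurableSpace Ω] (P : Measure Ω) [IsProbabilityMeasure P]
    (M : ℕ) (hM : 1 ≤ M) (lamSR lamRD η Ψ γth : ℝ)
    (hSR : 0 < lamSR) (hRD : 0 < lamRD) (hη : 0 < η) (hΨ : 0 < Ψ) (hγ : 0 < γth)
    (X : Fin M → Ω → ℝ) (Y : Ω → ℝ)
    (hmeasX : ∀ m, Measurable (X m)) (hmeasY : Measurable Y)
    (hindep : iIndepFun (Sum.elim X fun _ : Unit => Y) P)
    (hlawX : ∀ m, P.map (X m) = expMeasure lamSR)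
    (hlawY : P.map Y = expMeasure lamRD) :
    (P {ω | η * Ψ * (⨆ m, X m ω) * Y ω / (1 + Real.sqrt (η * Y ω)) ^ 2 < γth}).toReal =
      1 + ∑ b ∈ Finset.Icc 1 M, (-1 : ℝ) ^ b * (M.choose b : ℝ) *
        Real.exp (-(b : ℝ) * lamSR * γth / Ψ) *
        (lamRD * ∫ x in Set.Ioi (0 : ℝ),
          Real.exp (-2 * (b : ℝ) * lamSR * γth / (Ψ * Real.sqrt (η * x))
            - (b : ℝ) * lamSR * γth / (η * Ψ * x) - lamRD * x)) := by
  classical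
  haveI : Nonempty (Fin M) := ⟨⟨0, hM⟩⟩
  set Z : Fin M ⊕ Unit → Ω → ℝ := Sum.elim X (fun _ : Unit => Y) with hZ
  have hmeasZ : ∀ i, Measurable (Z i) := by rintro (m | u); exacts [hmeasX m, hmeasY]
  set S : Ω → ℝ := fun ω => ⨆ m, X m ω with hS
  have hmeasS : Measurable S := Measurable.iSup hmeasX
  -- independence of Y and S
  have hYS : IndepFun Y S P := by
    have h := hindep.indepFun_finset {Sum.inr ()} (Finset.univ.image Sum.inl)
      (by simp) hmeasZ
    have hg1 : Measurable fun (v : ({Sum.inr ()} : Finset (Fin M ⊕ Unit)) → ℝ) =>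
        v ⟨Sum.inr (), by simp⟩ := measurable_pi_apply _
    have hg2 : Measurable fun (v : ((Finset.univ.image Sum.inl :
          Finset (Fin M ⊕ Unit)) : Type _) → ℝ) =>
        ⨆ m : Fin M, v ⟨Sum.inl m, by simp⟩ :=
      Measurable.iSup fun m => measurable_pi_apply _
    exact h.comp hg1 hg2
  -- CDF of S
  have hmapS : ∀ t : ℝ, 0 < t →
      P.map S (Set.Iio t) = ENNReal.ofReal ((1 - Real.exp (-(lamSR * t))) ^ M) := by
    intro t ht
    rw [Measure.map_apply hmeasS measurableSet_Iio]
    have hpre : S ⁻¹' Set.Iio t = ⋂ i ∈ Finset.univ.image Sum.inl, Z i ⁻¹' Set.Iio t := by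
      ext ω
      simp [hS, hZ, fin_ciSup_lt_iff]
    rw [hpre, hindep.measure_inter_preimage_eq_mul (Finset.univ.image Sum.inl)
      (sets := fun _ => Set.Iio t) (fun i _ => measurableSet_Iio)]
    rw [Finset.prod_image Sum.inl_injective.injOn]
    have hfac : ∀ m : Fin M, P (Z (Sum.inl m) ⁻¹' Set.Iio t)
        = ENNReal.ofReal (1 - Real.exp (-(lamSR * t))) := by
      intro m
      rw [show Z (Sum.inl m) = X m from rfl, ← Measure.map_apply (hmeasX m) measurableSet_Iio,
        hlawX m, expMeasure_Iio hSR ht.le]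
    rw [Finset.prod_congr rfl (fun m _ => hfac m), Finset.prod_const, Finset.card_univ,
      Fintype.card_fin, ← ENNReal.ofReal_pow]
    have : Real.exp (-(lamSR * t)) ≤ 1 := by
      rw [Real.exp_le_one_iff]
      nlinarith
    linarith
  -- joint law
  haveI : IsProbabilityMeasure (P.map Y) := Measure.isProbabilityMeasure_map hmeasY.aemeasurable
  haveI : IsProbabilityMeasure (P.map S) := Measure.isProbabilityMeasure_map hmeasS.aemeasurable
  have hjoint : P.map (fun ω => (Y ω, S ω)) = (P.map Y).prod (P.map S) :=
    (indepFun_iff_map_prod_eq_prod_map_map hmeasY.aemeasurable hmeasS.aemeasurable).mp hYS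
  set A : Set (ℝ × ℝ) :=
    {p | η * Ψ * p.2 * p.1 / (1 + Real.sqrt (η * p.1)) ^ 2 < γth} with hA
  have hmeasA : MeasurableSet A := by
    have hf : Measurable fun p : ℝ × ℝ =>
        η * Ψ * p.2 * p.1 / (1 + Real.sqrt (η * p.1)) ^ 2 := by
      apply Measurable.div
      · fun_prop
      · exact ((measurable_const.add
          (Real.continuous_sqrt.measurable.comp (measurable_const.mul measurable_fst))).pow
          measurable_const)
    exact measurableSet_lt hf measurable_const
  have hev : {ω | η * Ψ * S ω * Y ω / (1 + Real.sqrt (η * Y ω)) ^ 2 < γth}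
      = (fun ω => (Y ω, S ω)) ⁻¹' A := rfl
  -- threshold function
  set t : ℝ → ℝ := fun y => γth * (1 + Real.sqrt (η * y)) ^ 2 / (η * Ψ * y) with ht
  have htpos : ∀ y : ℝ, 0 < y → 0 < t y := by
    intro y hy
    have h1 : (0:ℝ) < (1 + Real.sqrt (η * y)) ^ 2 := by positivity
    have h2 : (0:ℝ) < η * Ψ * y := by positivity
    exact div_pos (mul_pos hγ h1) h2
  have hsec : ∀ y : ℝ, 0 < y → Prod.mk y ⁻¹' A = Set.Iio (t y) := by
    intro y hy
    ext x
    have hd : (0:ℝ) < (1 + Real.sqrt (η * y)) ^ 2 := by positivity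
    have h2 : (0:ℝ) < η * Ψ * y := by positivity
    simp only [hA, Set.mem_preimage, Set.mem_setOf_eq, Set.mem_Iio, ht]
    rw [div_lt_iff₀ hd, lt_div_iff₀ h2]
    constructor <;> intro h <;> nlinarith
  -- reduce to a lintegral against the law of Y
  have hP : P {ω | η * Ψ * S ω * Y ω / (1 + Real.sqrt (η * Y ω)) ^ 2 < γth}
      = ∫⁻ y, (P.map S) (Prod.mk y ⁻¹' A) ∂(P.map Y) := by
    rw [hev, ← Measure.map_apply (hmeasY.prodMk hmeasS) hmeasA, hjoint,
      Measure.prod_apply hmeasA]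
  set g : ℝ → ENNReal := fun y => (P.map S) (Prod.mk y ⁻¹' A) with hg
  have hmeasg : Measurable g := measurable_measure_prodMk_left hmeasA
  have hpdfmeas : Measurable (exponentialPDF lamRD) :=
    (measurable_exponentialPDFReal lamRD).ennreal_ofReal
  have h1 : ∫⁻ y, g y ∂(P.map Y) = ∫⁻ y, exponentialPDF lamRD y * g y := by
    rw [hlawY, show expMeasure lamRD = volume.withDensity (exponentialPDF lamRD) from rfl,
      lintegral_withDensity_eq_lintegral_mul _ hpdfmeas hmeasg]
    rfl
  have h0 : ∀ᵐ (y : ℝ), y ≠ (0:ℝ) := by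
    have hset : {y : ℝ | ¬ y ≠ 0} = {(0:ℝ)} := by ext y; simp
    rw [ae_iff, hset]
    exact Real.volume_singleton
  have h2 : (∫⁻ y, exponentialPDF lamRD y * g y)
      = ∫⁻ y in Set.Ioi (0:ℝ), exponentialPDF lamRD y * g y := by
    rw [← lintegral_indicator measurableSet_Ioi _]
    refine lintegral_congr_ae ?_
    filter_upwards [h0] with y hy
    by_cases hy2 : y ∈ Set.Ioi (0:ℝ)
    · rw [Set.indicator_of_mem hy2]
    · have hyneg : y < 0 := by
        simp only [Set.mem_Ioi, not_lt] at hy2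
        exact lt_of_le_of_ne hy2 hy
      rw [Set.indicator_of_notMem hy2, exponentialPDF_of_neg hyneg, zero_mul]
  set F : ℝ → ℝ :=
    fun y => lamRD * Real.exp (-(lamRD * y)) * (1 - Real.exp (-(lamSR * t y))) ^ M with hF
  have h3 : (∫⁻ y in Set.Ioi (0:ℝ), exponentialPDF lamRD y * g y)
      = ∫⁻ y in Set.Ioi (0:ℝ), ENNReal.ofReal (F y) := by
    refine setLIntegral_congr_fun measurableSet_Ioi (fun y hy => ?_)
    simp only [hg, hF]
    rw [exponentialPDF_of_nonneg (le_of_lt hy), hsec y hy, hmapS (t y) (htpos y hy),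
      ← ENNReal.ofReal_mul (by positivity)]
  have hmeast : Measurable t := by
    apply Measurable.div
    · exact (measurable_const.mul (((measurable_const.add
        (Real.continuous_sqrt.measurable.comp (measurable_const.mul measurable_id))).pow
        measurable_const)))
    · exact measurable_const.mul measurable_id
  have hFmeas : Measurable F := by
    apply Measurable.mul
    · exact measurable_const.mul ((measurable_const.mul measurable_id).neg.exp)
    · exact ((measurable_const.sub ((measurable_const.mul hmeast).neg.exp)).pow measurable_const)
  have hbound : IntegrableOn (fun y => lamRD * Real.exp (-lamRD * y)) (Set.Ioi (0:ℝ)) :=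
    (exp_neg_integrableOn_Ioi 0 hRD).const_mul lamRD
  have hFbd : ∀ y ∈ Set.Ioi (0:ℝ), 0 ≤ F y ∧ F y ≤ lamRD * Real.exp (-lamRD * y) := by
    intro y hy
    have hty := htpos y hy
    have hu0 : (0:ℝ) < Real.exp (-(lamSR * t y)) := Real.exp_pos _
    have hu1 : Real.exp (-(lamSR * t y)) ≤ 1 := by
      rw [Real.exp_le_one_iff]
      nlinarith
    have hp0 : (0:ℝ) ≤ (1 - Real.exp (-(lamSR * t y))) ^ M := pow_nonneg (by linarith) M
    have hp1 : (1 - Real.exp (-(lamSR * t y))) ^ M ≤ 1 :=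
      pow_le_one₀ (by linarith) (by linarith)
    have hbase : (0:ℝ) < lamRD * Real.exp (-(lamRD * y)) := by positivity
    constructor
    · simp only [hF]
      exact mul_nonneg hbase.le hp0
    · simp only [hF]
      have : lamRD * Real.exp (-(lamRD * y)) * (1 - Real.exp (-(lamSR * t y))) ^ M
          ≤ lamRD * Real.exp (-(lamRD * y)) * 1 := by
        exact mul_le_mul_of_nonneg_left hp1 hbase.le
      simpa [neg_mul] using this
  have hFint : IntegrableOn F (Set.Ioi (0:ℝ)) := by
    refine Integrable.mono hbound hFmeas.aestronglyMeasurable ?_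
    filter_upwards [self_mem_ae_restrict measurableSet_Ioi] with y hy
    obtain ⟨hf0, hfb⟩ := hFbd y hy
    rw [Real.norm_eq_abs, Real.norm_eq_abs, abs_of_nonneg hf0]
    have : (0:ℝ) ≤ lamRD * Real.exp (-lamRD * y) := by positivity
    rw [abs_of_nonneg this]
    exact hfb
  have h4 : (∫⁻ y in Set.Ioi (0:ℝ), ENNReal.ofReal (F y))
      = ENNReal.ofReal (∫ y in Set.Ioi (0:ℝ), F y) := by
    rw [← ofReal_integral_eq_lintegral_ofReal hFint]
    filter_upwards [self_mem_ae_restrict measurableSet_Ioi] with y hy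
    exact (hFbd y hy).1
  have hIto : (P {ω | η * Ψ * S ω * Y ω / (1 + Real.sqrt (η * Y ω)) ^ 2 < γth}).toReal
      = ∫ y in Set.Ioi (0:ℝ), F y := by
    rw [hP, h1, h2, h3, h4, ENNReal.toReal_ofReal]
    exact setIntegral_nonneg measurableSet_Ioi fun y hy => (hFbd y hy).1
  rw [show {ω | η * Ψ * (⨆ m, X m ω) * Y ω / (1 + Real.sqrt (η * Y ω)) ^ 2 < γth}
      = {ω | η * Ψ * S ω * Y ω / (1 + Real.sqrt (η * Y ω)) ^ 2 < γth} from rfl, hIto]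
  -- the purely real computation
  set H : ℕ → ℝ → ℝ :=
    fun k y => lamRD * Real.exp (-(lamRD * y)) * Real.exp (-(lamSR * t y)) ^ k with hHdef
  set G : ℕ → ℝ → ℝ := fun k y => ((M.choose k : ℝ) * (-1) ^ k) * H k y with hGdef
  have hsum : ∀ y : ℝ, F y = ∑ k ∈ Finset.range (M + 1), G k y := by
    intro y
    simp only [hF, hGdef, hHdef]
    rw [sub_eq_add_neg, add_comm (1 : ℝ), add_pow, Finset.mul_sum]
    refine Finset.sum_congr rfl fun k hk => ?_
    rw [neg_pow]
    ring
  have hHmeas : ∀ k : ℕ, Measurable (H k) := by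
    intro k
    apply Measurable.mul
    · exact measurable_const.mul ((measurable_const.mul measurable_id).neg.exp)
    · exact ((measurable_const.mul hmeast).neg.exp.pow measurable_const)
  have hHint : ∀ k : ℕ, IntegrableOn (H k) (Set.Ioi (0:ℝ)) := by
    intro k
    refine Integrable.mono hbound (hHmeas k).aestronglyMeasurable ?_
    filter_upwards [self_mem_ae_restrict measurableSet_Ioi] with y hy
    have hty := htpos y hy
    have hu0 : (0:ℝ) < Real.exp (-(lamSR * t y)) := Real.exp_pos _
    have hu1 : Real.exp (-(lamSR * t y)) ≤ 1 := by
      rw [Real.exp_le_one_iff]; nlinarith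
    have hp0 : (0:ℝ) ≤ Real.exp (-(lamSR * t y)) ^ k := by positivity
    have hp1 : Real.exp (-(lamSR * t y)) ^ k ≤ 1 := pow_le_one₀ hu0.le hu1
    have hbase : (0:ℝ) < lamRD * Real.exp (-(lamRD * y)) := by positivity
    simp only [hHdef]
    rw [Real.norm_eq_abs, Real.norm_eq_abs, abs_of_nonneg (mul_nonneg hbase.le hp0),
      abs_of_nonneg (by positivity : (0:ℝ) ≤ lamRD * Real.exp (-lamRD * y))]
    have : lamRD * Real.exp (-(lamRD * y)) * Real.exp (-(lamSR * t y)) ^ k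
        ≤ lamRD * Real.exp (-(lamRD * y)) * 1 := mul_le_mul_of_nonneg_left hp1 hbase.le
    simpa [neg_mul] using this
  have hGint : ∀ k : ℕ, IntegrableOn (G k) (Set.Ioi (0:ℝ)) := fun k =>
    (hHint k).const_mul _
  have hexpint : (∫ y in Set.Ioi (0:ℝ), Real.exp (-(lamRD * y))) = lamRD⁻¹ := by
    have h := integral_comp_mul_left_Ioi (fun u => Real.exp (-u)) 0 hRD
    simp only [mul_zero] at h
    rw [h, integral_exp_neg_Ioi_zero, smul_eq_mul, mul_one]
  have hG0 : (∫ y in Set.Ioi (0:ℝ), G 0 y) = 1 := by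
    have : ∀ y : ℝ, G 0 y = lamRD * Real.exp (-(lamRD * y)) := by
      intro y; simp [hGdef, hHdef]
    simp only [this]
    rw [integral_const_mul, hexpint, mul_inv_cancel₀ hRD.ne']
  have hty2 : ∀ y : ℝ, 0 < y →
      t y = γth / Ψ + 2 * γth / (Ψ * Real.sqrt (η * y)) + γth / (η * Ψ * y) := by
    intro y hy
    have hs0 : 0 < Real.sqrt (η * y) := Real.sqrt_pos.mpr (by positivity)
    have hs2 : Real.sqrt (η * y) ^ 2 = η * y := Real.sq_sqrt (by positivity)
    simp only [ht]
    have h1 : η * Ψ * y = Ψ * Real.sqrt (η * y) ^ 2 := by rw [hs2]; ring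
    rw [h1]
    field_simp
    nlinarith [hs2, hs0, hΨ, hγ]
  have hterm : ∀ b ∈ Finset.Icc 1 M, (∫ y in Set.Ioi (0:ℝ), G b y)
      = (-1:ℝ) ^ b * (M.choose b : ℝ) * Real.exp (-(b:ℝ) * lamSR * γth / Ψ) *
        (lamRD * ∫ x in Set.Ioi (0:ℝ),
          Real.exp (-2 * (b:ℝ) * lamSR * γth / (Ψ * Real.sqrt (η * x))
            - (b:ℝ) * lamSR * γth / (η * Ψ * x) - lamRD * x)) := by
    intro b hb
    have hcong : Set.EqOn (G b)
        (fun y => ((-1:ℝ) ^ b * (M.choose b : ℝ) *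
            Real.exp (-(b:ℝ) * lamSR * γth / Ψ) * lamRD) *
          Real.exp (-2 * (b:ℝ) * lamSR * γth / (Ψ * Real.sqrt (η * y))
            - (b:ℝ) * lamSR * γth / (η * Ψ * y) - lamRD * y)) (Set.Ioi 0) := by
      intro y hy
      simp only [hGdef, hHdef]
      have harg : -(lamRD * y) + (b:ℝ) * (-(lamSR * t y))
          = (-(b:ℝ) * lamSR * γth / Ψ)
            + (-2 * (b:ℝ) * lamSR * γth / (Ψ * Real.sqrt (η * y))
              - (b:ℝ) * lamSR * γth / (η * Ψ * y) - lamRD * y) := by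
        rw [hty2 y hy]
        ring
      rw [show Real.exp (-(lamSR * t y)) ^ b
            = Real.exp ((b:ℝ) * (-(lamSR * t y))) from (Real.exp_nat_mul _ b).symm,
        mul_assoc lamRD, ← Real.exp_add, harg, Real.exp_add]
      ring
    rw [setIntegral_congr_fun measurableSet_Ioi hcong, integral_const_mul]
    ring
  have hins : Finset.range (M + 1) = insert 0 (Finset.Icc 1 M) := by
    ext k
    simp only [Finset.mem_range, Finset.mem_insert, Finset.mem_Icc]
    omega
  rw [setIntegral_congr_fun measurableSet_Ioi (fun y _ => hsum y),
    integral_finset_sum _ (fun k _ => hGint k), hins,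
    Finset.sum_insert (by simp), hG0]
  congr 1
  exact Finset.sum_congr rfl hterm
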